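/- Let X, Y, Z be connected graphs of bounded degree. If f : X → Y is a quasi-κ₁-to-one quasi-isometry and g : Y → Z is a quasi-κ₂-to-one quasi-isometry, then the composition g∘f : X → Z is a quasi-(κ₁κ₂)-to-one quasi-isometry. -/

import Mathlib

open Set

/-- Closed `R`-neighborhood of a vertex set in a graph, for the graph metric. -/
def gNbhd {X : Type*} (G : SimpleGraph X) (A : Set X) (R : ℕ) : Set X :=
  {x | ∃ a ∈ A, G.dist x a ≤ R}

/-- `R`-boundary `∂_R A := A^{+R} ∩ (complement A)^{+R}`. -/
def gBdryR {X : Type*} (G : SimpleGraph X) (A : Set X) (R : ℕ) : Set X :=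
  gNbhd G A R ∩ gNbhd G Aᶜ R

/-- Outer boundary `∂A := A^{+1} \ A`. -/
def gBdry {X : Type*} (G : SimpleGraph X) (A : Set X) : Set X :=
  gNbhd G A 1 \ A

/-- All vertex degrees are at most `D`. -/
def BddDeg {X : Type*} (G : SimpleGraph X) (D : ℕ) : Prop :=
  ∀ v, (G.neighborSet v).ncard ≤ D

/-- `f` is a `(C,K)`-quasi-isometry for the graph metrics. -/
def IsQIWith {X Y : Type*} (G : SimpleGraph X) (H : SimpleGraph Y) (C K : ℝ)
    (f : X → Y) : Prop :=
  (∀ x y : X, (1 / C) * (G.dist x y : ℝ) - K ≤ (H.dist (f x) (f y) : ℝ) ∧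
    (H.dist (f x) (f y) : ℝ) ≤ C * (G.dist x y : ℝ) + K) ∧
  ∀ y : Y, ∃ x : X, (H.dist y (f x) : ℝ) ≤ K

/-- `f` is a quasi-isometry for the graph metrics. -/
def IsQI {X Y : Type*} (G : SimpleGraph X) (H : SimpleGraph Y) (f : X → Y) : Prop :=
  ∃ C K : ℝ, 1 ≤ C ∧ 0 ≤ K ∧ IsQIWith G H C K f

/-- `f : X → Y` is quasi-`κ`-to-one: `|κ|A| - |f⁻¹(A)|| ≤ C|∂A|` for all finite `A ⊆ Y`. -/
def QuasiKToOne {X Y : Type*} (H : SimpleGraph Y) (f : X → Y) (κ : ℝ) : Prop :=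
  ∃ C : ℝ, 0 < C ∧ ∀ A : Set Y, A.Finite →
    |κ * (A.ncard : ℝ) - ((f ⁻¹' A).ncard : ℝ)| ≤ C * ((gBdry H A).ncard : ℝ)

/-- Amenability via a Følner sequence: finite nonempty sets with vanishing
boundary-to-size ratio. -/
def IsAmenableGraph {X : Type*} (G : SimpleGraph X) : Prop :=
  ∃ A : ℕ → Set X, (∀ n, (A n).Finite ∧ (A n).Nonempty) ∧
    Filter.Tendsto (fun n => ((gBdry G (A n)).ncard : ℝ) / ((A n).ncard : ℝ))
      Filter.atTop (nhds 0)

/-! ### Auxiliary lemmas -/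

lemma ball_step {V : Type*} {G : SimpleGraph V} (hc : G.Connected) (x : V) (R : ℕ) :
    {y | G.dist x y ≤ R + 1} ⊆
      {y | G.dist x y ≤ R} ∪ ⋃ b ∈ {y | G.dist x y ≤ R}, G.neighborSet b := by
  intro y hy
  rcases le_or_gt (G.dist x y) R with h | h
  · exact Or.inl h
  · have hy' : G.dist x y ≤ R + 1 := hy
    have hd : G.dist y x = R + 1 := by
      rw [SimpleGraph.dist_comm]; omega
    obtain ⟨p, hp⟩ := (hc y x).exists_walk_length_eq_dist
    cases p with
    | nil => rw [SimpleGraph.dist_self] at hd; omega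
    | @cons _ b _ hadj q =>
      refine Or.inr (Set.mem_biUnion (?_ : G.dist x b ≤ R) hadj.symm)
      rw [SimpleGraph.dist_comm]
      have := SimpleGraph.dist_le q
      rw [SimpleGraph.Walk.length_cons, hd] at hp
      omega

lemma biUnion_card_le {α β : Type*} {s : Set α} (hs : s.Finite) (t : α → Set β) (m : ℕ)
    (hf : ∀ a, (t a).Finite) (hm : ∀ a, (t a).ncard ≤ m) :
    (⋃ a ∈ s, t a).Finite ∧ (⋃ a ∈ s, t a).ncard ≤ s.ncard * m := by
  refine Set.Finite.induction_on (motive := fun s _ =>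
    (⋃ a ∈ s, t a).Finite ∧ (⋃ a ∈ s, t a).ncard ≤ s.ncard * m) s hs (by simp) ?_
  intro a s ha hsf ih
  rw [Set.biUnion_insert]
  refine ⟨(hf a).union ih.1, ?_⟩
  calc (t a ∪ ⋃ x ∈ s, t x).ncard ≤ (t a).ncard + (⋃ x ∈ s, t x).ncard :=
        Set.ncard_union_le _ _
    _ ≤ m + s.ncard * m := add_le_add (hm a) ih.2
    _ = (insert a s).ncard * m := by
        rw [Set.ncard_insert_of_notMem ha hsf]; ring

lemma ball_finite_card {V : Type*} {G : SimpleGraph V} (hc : G.Connected) {D : ℕ}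
    (hfin : ∀ v, (G.neighborSet v).Finite) (hD : ∀ v, (G.neighborSet v).ncard ≤ D) (x : V) :
    ∀ R : ℕ, {y | G.dist x y ≤ R}.Finite ∧ {y | G.dist x y ≤ R}.ncard ≤ (D + 1) ^ R := by
  intro R
  induction R with
  | zero =>
    have hsub : {y | G.dist x y ≤ 0} ⊆ {x} := by
      intro y hy
      have : G.dist x y = 0 := Nat.le_zero.mp hy
      simp [hc.dist_eq_zero_iff.mp this |>.symm]
    refine ⟨(Set.finite_singleton x).subset hsub, ?_⟩
    simpa using Set.ncard_le_ncard hsub (Set.finite_singleton x)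
  | succ R ih =>
    obtain ⟨hbf, hbc⟩ := ih
    obtain ⟨huf, huc⟩ := biUnion_card_le hbf (fun b => G.neighborSet b) D hfin hD
    have hsub := ball_step hc x R
    refine ⟨(hbf.union huf).subset hsub, ?_⟩
    calc {y | G.dist x y ≤ R + 1}.ncard
        ≤ ({y | G.dist x y ≤ R} ∪ ⋃ b ∈ {y | G.dist x y ≤ R}, G.neighborSet b).ncard :=
          Set.ncard_le_ncard hsub (hbf.union huf)
      _ ≤ {y | G.dist x y ≤ R}.ncard + (⋃ b ∈ {y | G.dist x y ≤ R}, G.neighborSet b).ncard :=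
          Set.ncard_union_le _ _
      _ ≤ (D + 1) ^ R + (D + 1) ^ R * D := by
          have := huc.trans (Nat.mul_le_mul_right D hbc)
          omega
      _ = (D + 1) ^ (R + 1) := by ring

lemma exists_bdry_of_walk {V : Type*} {G : SimpleGraph V} (hc : G.Connected) {A : Set V}
    {u v : V} (p : G.Walk u v) (hu : u ∉ A) (hv : v ∈ A) :
    ∃ w ∈ gBdry G A, G.dist u w ≤ p.length := by
  induction p with
  | nil => exact absurd hv hu
  | @cons u b v hadj q ih =>
    by_cases hb : b ∈ A
    · exact ⟨u, ⟨⟨b, hb, le_of_eq (SimpleGraph.dist_eq_one_iff_adj.mpr hadj)⟩, hu⟩,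
        by simp [SimpleGraph.dist_self]⟩
    · obtain ⟨w, hw, hd⟩ := ih hb hv
      refine ⟨w, hw, ?_⟩
      calc G.dist u w ≤ G.dist u b + G.dist b w := hc.dist_triangle
        _ ≤ 1 + q.length :=
            add_le_add (le_of_eq (SimpleGraph.dist_eq_one_iff_adj.mpr hadj)) hd
        _ = (SimpleGraph.Walk.cons hadj q).length := by
            rw [SimpleGraph.Walk.length_cons]; omega

lemma exists_bdry_of_dist {V : Type*} {G : SimpleGraph V} (hc : G.Connected) {A : Set V}
    {u v : V} (hu : u ∉ A) (hv : v ∈ A) :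
    ∃ w ∈ gBdry G A, G.dist u w ≤ G.dist u v := by
  obtain ⟨p, hp⟩ := (hc u v).exists_walk_length_eq_dist
  obtain ⟨w, hw, hd⟩ := exists_bdry_of_walk hc p hu hv
  exact ⟨w, hw, hp ▸ hd⟩

/-- Neighbors of a member, outside `A`, are in the boundary. -/
lemma nbr_diff_subset_bdry {W : Type*} (Hw : SimpleGraph W) {A : Set W} {w₀ : W}
    (hw₀ : w₀ ∈ A) : Hw.neighborSet w₀ \ A ⊆ gBdry Hw A := by
  rintro v ⟨hv, hvA⟩
  exact ⟨⟨w₀, hw₀, le_of_eq (SimpleGraph.dist_eq_one_iff_adj.mpr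
    ((SimpleGraph.mem_neighborSet _ _ _).mp hv).symm)⟩, hvA⟩

/-- In the degenerate situation where some vertex of `W` has infinitely many
neighbors, a quasi-`κ`-to-one map is exactly `κ`-to-one on finite sets. -/
lemma exact_of_infinite_nbr {V W : Type*} {Hw : SimpleGraph W} {h : V → W} {κ Cc : ℝ}
    (hκ : 0 < κ)
    (hq : ∀ A : Set W, A.Finite →
      |κ * (A.ncard : ℝ) - ((h ⁻¹' A).ncard : ℝ)| ≤ Cc * ((gBdry Hw A).ncard : ℝ))
    {w₀ : W} (hw : (Hw.neighborSet w₀).Infinite) :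
    ∀ A : Set W, A.Finite → (h ⁻¹' A).Finite ∧ ((h ⁻¹' A).ncard : ℝ) = κ * (A.ncard : ℝ) := by
  have key : ∀ B : Set W, B.Finite → w₀ ∈ B →
      (h ⁻¹' B).Finite ∧ ((h ⁻¹' B).ncard : ℝ) = κ * (B.ncard : ℝ) := by
    intro B hB hw₀B
    have hbd : (gBdry Hw B).Infinite :=
      ((hw.diff hB).mono (nbr_diff_subset_bdry Hw hw₀B))
    have h0 : ((gBdry Hw B).ncard : ℝ) = 0 := by rw [hbd.ncard]; norm_num
    have := hq B hB
    rw [h0, mul_zero] at this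
    have heq : ((h ⁻¹' B).ncard : ℝ) = κ * (B.ncard : ℝ) := by
      have := abs_nonpos_iff.mp this
      linarith [sub_eq_zero.mp this]
    refine ⟨?_, heq⟩
    by_contra hinf
    have hinf' : (h ⁻¹' B).Infinite := hinf
    rw [hinf'.ncard] at heq
    have hpos : 0 < B.ncard := (Set.ncard_pos hB).mpr ⟨w₀, hw₀B⟩
    have : (0:ℝ) < κ * (B.ncard : ℝ) := by positivity
    rw [← heq] at this
    norm_num at this
  intro A hA
  by_cases hw₀A : w₀ ∈ A
  · exact key A hA hw₀A
  · have hA' := key (insert w₀ A) (hA.insert w₀) (Set.mem_insert _ _)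
    have hs := key {w₀} (Set.finite_singleton w₀) rfl
    have hsub : h ⁻¹' {w₀} ⊆ h ⁻¹' (insert w₀ A) :=
      Set.preimage_mono (Set.singleton_subset_iff.mpr (Set.mem_insert _ _))
    have hAeq : h ⁻¹' A = h ⁻¹' (insert w₀ A) \ h ⁻¹' {w₀} := by
      rw [← Set.preimage_diff]
      rw [Set.insert_diff_self_of_notMem hw₀A]
    have hfin : (h ⁻¹' A).Finite := hAeq ▸ hA'.1.diff
    refine ⟨hfin, ?_⟩
    have hcard := Set.ncard_diff_add_ncard_of_subset hsub hA'.1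
    have hcast : ((h ⁻¹' (insert w₀ A) \ h ⁻¹' {w₀}).ncard : ℝ) + ((h ⁻¹' {w₀}).ncard : ℝ)
        = ((h ⁻¹' (insert w₀ A)).ncard : ℝ) := by exact_mod_cast congrArg Nat.cast hcard
    have hnA' : ((insert w₀ A).ncard : ℝ) = (A.ncard : ℝ) + 1 := by
      rw [Set.ncard_insert_of_notMem hw₀A hA]; push_cast; ring
    rw [hAeq]
    rw [hA'.2, hs.2, hnA'] at hcast
    simp only [Set.ncard_singleton] at hcast
    push_cast at hcast ⊢
    linarith

/-- Under the same degeneracy, preimages of infinite sets are infinite. -/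
lemma preimage_infinite_of_exact {V W : Type*} {h : V → W} {κ : ℝ} (hκ : 0 < κ)
    (hex : ∀ A : Set W, A.Finite →
      (h ⁻¹' A).Finite ∧ ((h ⁻¹' A).ncard : ℝ) = κ * (A.ncard : ℝ))
    {B : Set W} (hB : B.Infinite) : (h ⁻¹' B).Infinite := by
  by_contra hninf
  rw [Set.not_infinite] at hninf
  have hfin := hninf
  set N := (h ⁻¹' B).ncard with hN
  obtain ⟨n, hn⟩ := exists_nat_gt ((N : ℝ) / κ)
  obtain ⟨B', hB'B, hB'fin, hB'card⟩ := hB.exists_subset_ncard_eq n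
  have h1 := (hex B' hB'fin).2
  have h2 : (h ⁻¹' B').ncard ≤ N := Set.ncard_le_ncard (Set.preimage_mono hB'B) hfin
  rw [hB'card] at h1
  have : (N : ℝ) < κ * n := by
    rw [div_lt_iff₀ hκ] at hn
    linarith [mul_comm (n:ℝ) κ]
  rw [← h1] at this
  exact absurd this (by exact_mod_cast Nat.not_lt.mpr h2)

lemma isQI_comp {X Y Z : Type*} {G : SimpleGraph X} {H : SimpleGraph Y} {I : SimpleGraph Z}
    (hIc : I.Connected) {f : X → Y} {g : Y → Z}
    {C₁ K₁ C₂ K₂ : ℝ} (hC₁ : 1 ≤ C₁) (hK₁ : 0 ≤ K₁) (hC₂ : 1 ≤ C₂) (hK₂ : 0 ≤ K₂)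
    (hf : IsQIWith G H C₁ K₁ f) (hg : IsQIWith H I C₂ K₂ g) :
    IsQI G I (g ∘ f) := by
  have hC₁0 : (0:ℝ) < C₁ := lt_of_lt_of_le one_pos hC₁
  have hC₂0 : (0:ℝ) < C₂ := lt_of_lt_of_le one_pos hC₂
  refine ⟨C₁ * C₂, C₂ * K₁ + 2 * K₂ + K₁, by nlinarith, by nlinarith, ?_, ?_⟩
  · intro x y
    have l1 := (hf.1 x y).1
    have u1 := (hf.1 x y).2
    have l2 := (hg.1 (f x) (f y)).1
    have u2 := (hg.1 (f x) (f y)).2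
    simp only [Function.comp_apply]
    constructor
    · have hm : (1/C₂) * ((1/C₁) * (G.dist x y : ℝ) - K₁) ≤ (1/C₂) * (H.dist (f x) (f y) : ℝ) :=
        mul_le_mul_of_nonneg_left l1 (by positivity)
      have e : (1/C₂) * ((1/C₁) * (G.dist x y : ℝ) - K₁)
          = 1/(C₁*C₂) * (G.dist x y : ℝ) - K₁/C₂ := by field_simp
      have hd : K₁/C₂ ≤ K₁ := div_le_self hK₁ hC₂
      rw [e] at hm
      have hp : (0:ℝ) ≤ C₂ * K₁ := by positivity
      linarith
    · have hm : C₂ * (H.dist (f x) (f y) : ℝ) ≤ C₂ * (C₁ * (G.dist x y : ℝ) + K₁) :=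
        mul_le_mul_of_nonneg_left u1 (le_of_lt hC₂0)
      nlinarith
  · intro z
    obtain ⟨y, hy⟩ := hg.2 z
    obtain ⟨x, hx⟩ := hf.2 y
    refine ⟨x, ?_⟩
    have ht : (I.dist z (g (f x)) : ℝ) ≤ (I.dist z (g y) : ℝ) + (I.dist (g y) (g (f x)) : ℝ) := by
      exact_mod_cast Nat.cast_le.mpr hIc.dist_triangle
    have hu := (hg.1 y (f x)).2
    have hm : C₂ * (H.dist y (f x) : ℝ) ≤ C₂ * K₁ :=
      mul_le_mul_of_nonneg_left hx (le_of_lt hC₂0)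
    simp only [Function.comp_apply]
    linarith

section LocFin
variable {Y Z : Type*} {H : SimpleGraph Y} {I : SimpleGraph Z}

lemma preimage_finite_of_locfin (hHc : H.Connected) {DY : ℕ}
    (hYfin : ∀ v, (H.neighborSet v).Finite) (hDY : ∀ v, (H.neighborSet v).ncard ≤ DY)
    {g : Y → Z} {C₂ K₂ : ℝ} (hC₂ : 1 ≤ C₂)
    (hlow : ∀ x y : Y, (1/C₂) * (H.dist x y : ℝ) - K₂ ≤ (I.dist (g x) (g y) : ℝ))
    {A : Set Z} (hA : A.Finite) : (g ⁻¹' A).Finite := by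
  have hC₂0 : (0:ℝ) < C₂ := lt_of_lt_of_le one_pos hC₂
  have hrw : g ⁻¹' A = ⋃ z ∈ A, g ⁻¹' {z} := by ext x; simp
  rw [hrw]
  refine Set.Finite.biUnion hA (fun z _ => ?_)
  by_contra hinf
  have hinf' : (g ⁻¹' {z}).Infinite := hinf
  obtain ⟨x₀, hx₀⟩ := hinf'.nonempty
  have hsub : g ⁻¹' {z} ⊆ {y | H.dist x₀ y ≤ ⌊C₂ * K₂⌋₊} := by
    intro x hx
    have hzz : (I.dist (g x₀) (g x) : ℝ) = 0 := by
      simp only [Set.mem_preimage, Set.mem_singleton_iff] at hx hx₀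
      rw [hx₀, hx, SimpleGraph.dist_self]
      norm_num
    have hl := hlow x₀ x
    rw [hzz] at hl
    have : (H.dist x₀ x : ℝ) ≤ C₂ * K₂ := by
      have := mul_le_mul_of_nonneg_left hl (le_of_lt hC₂0)
      have he : C₂ * ((1/C₂) * (H.dist x₀ x : ℝ) - K₂) = (H.dist x₀ x : ℝ) - C₂ * K₂ := by
        field_simp
      nlinarith
    exact Nat.le_floor this
  exact hinf (((ball_finite_card hHc hYfin hDY x₀ _).1).subset hsub)

lemma bdryZ_finite (hHc : H.Connected) (hIc : I.Connected) {DY : ℕ}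
    (hYfin : ∀ v, (H.neighborSet v).Finite) (hDY : ∀ v, (H.neighborSet v).ncard ≤ DY)
    {g : Y → Z} {C₂ K₂ Cg κ₂ : ℝ} (hC₂ : 1 ≤ C₂) (hκ₂ : 0 < κ₂)
    (hlow : ∀ x y : Y, (1/C₂) * (H.dist x y : ℝ) - K₂ ≤ (I.dist (g x) (g y) : ℝ))
    (hgq : ∀ A : Set Z, A.Finite →
      |κ₂ * (A.ncard : ℝ) - ((g ⁻¹' A).ncard : ℝ)| ≤ Cg * ((gBdry I A).ncard : ℝ))
    {A : Set Z} (hA : A.Finite) : (gBdry I A).Finite := by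
  have hC₂0 : (0:ℝ) < C₂ := lt_of_lt_of_le one_pos hC₂
  by_contra hbdinf
  have hbdinf' : (gBdry I A).Infinite := hbdinf
  have hsub : gBdry I A ⊆ ⋃ a ∈ A, I.neighborSet a := by
    rintro w ⟨⟨a, ha, hd⟩, hw⟩
    have hne : w ≠ a := fun h => hw (h ▸ ha)
    have : I.dist w a = 1 := by
      have := (hIc.dist_eq_zero_iff (u := w) (v := a)).not.mpr hne
      omega
    exact Set.mem_biUnion ha (SimpleGraph.dist_eq_one_iff_adj.mp this).symm
  obtain ⟨a₀, ha₀, hNa₀⟩ : ∃ a₀ ∈ A, (I.neighborSet a₀).Infinite := by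
    by_contra hno
    push_neg at hno
    exact hbdinf ((hA.biUnion (fun a ha => hno a ha)).subset hsub)
  have hex := exact_of_infinite_nbr hκ₂ hgq hNa₀
  have hfib : ∀ z : Z, ∃ x : Y, g x = z := by
    intro z
    have h1 := (hex {z} (Set.finite_singleton z)).2
    simp only [Set.ncard_singleton, Nat.cast_one, mul_one] at h1
    have : (g ⁻¹' {z}).Nonempty := by
      apply Set.nonempty_of_ncard_ne_zero
      intro h0
      rw [h0] at h1
      norm_num at h1
      linarith
    obtain ⟨x, hx⟩ := this
    exact ⟨x, hx⟩
  obtain ⟨b₀, hb₀⟩ := hfib a₀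
  have hNinf : (g ⁻¹' (I.neighborSet a₀)).Infinite := by
    intro hNfin
    apply hNa₀
    have himg : I.neighborSet a₀ ⊆ g '' (g ⁻¹' (I.neighborSet a₀)) := by
      intro z hz
      obtain ⟨x, hx⟩ := hfib z
      exact ⟨x, by rw [Set.mem_preimage, hx]; exact hz, hx⟩
    exact (hNfin.image g).subset himg
  apply hNinf
  have hsub2 : g ⁻¹' (I.neighborSet a₀) ⊆ {y | H.dist b₀ y ≤ ⌊C₂ * (1 + K₂)⌋₊} := by
    intro x hx
    have hadj : I.Adj (g b₀) (g x) := by rw [hb₀]; exact hx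
    have hd1 : (I.dist (g b₀) (g x) : ℝ) = 1 := by
      rw [SimpleGraph.dist_eq_one_iff_adj.mpr hadj]; norm_num
    have hl := hlow b₀ x
    rw [hd1] at hl
    have : (H.dist b₀ x : ℝ) ≤ C₂ * (1 + K₂) := by
      have := mul_le_mul_of_nonneg_left hl (le_of_lt hC₂0)
      have he : C₂ * ((1/C₂) * (H.dist b₀ x : ℝ) - K₂) = (H.dist b₀ x : ℝ) - C₂ * K₂ := by
        field_simp
      nlinarith
    exact Nat.le_floor this
  exact ((ball_finite_card hHc hYfin hDY b₀ _).1).subset hsub2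

lemma bdry_comparison (hHc : H.Connected) (hIc : I.Connected) {DY : ℕ}
    (hYfin : ∀ v, (H.neighborSet v).Finite) (hDY : ∀ v, (H.neighborSet v).ncard ≤ DY)
    {g : Y → Z} {C₂ K₂ : ℝ} (hC₂ : 1 ≤ C₂) (hK₂ : 0 ≤ K₂)
    (hqi : IsQIWith H I C₂ K₂ g) {A : Set Z} (hbd : (gBdry I A).Finite) :
    (gBdry H (g ⁻¹' A)).ncard ≤ (gBdry I A).ncard * (DY + 1) ^ ⌊C₂ * (C₂ + 4 * K₂)⌋₊ := by
  have hC₂0 : (0:ℝ) < C₂ := lt_of_lt_of_le one_pos hC₂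
  set R₂ := ⌊C₂ * (C₂ + 4 * K₂)⌋₊ with hR₂
  choose xw hxw using hqi.2
  have hsub : gBdry H (g ⁻¹' A) ⊆ ⋃ w ∈ gBdry I A, {y | H.dist (xw w) y ≤ R₂} := by
    rintro y ⟨⟨b, hbB, hdist⟩, hyB⟩
    have hgb : g b ∈ A := hbB
    have hgy : g y ∉ A := hyB
    have hup := (hqi.1 y b).2
    have hd1 : (H.dist y b : ℝ) ≤ 1 := by exact_mod_cast hdist
    have hdyb : (I.dist (g y) (g b) : ℝ) ≤ C₂ + K₂ := by nlinarith
    obtain ⟨w, hwB, hw⟩ := exists_bdry_of_dist hIc hgy hgb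
    have hdw : (I.dist (g y) w : ℝ) ≤ C₂ + K₂ :=
      le_trans (by exact_mod_cast hw) hdyb
    have htr : (I.dist (g y) (g (xw w)) : ℝ)
        ≤ (I.dist (g y) w : ℝ) + (I.dist w (g (xw w)) : ℝ) := by
      exact_mod_cast Nat.cast_le.mpr hIc.dist_triangle
    have hdfar : (I.dist (g y) (g (xw w)) : ℝ) ≤ C₂ + 3 * K₂ := by
      have := hxw w
      linarith
    have hl := (hqi.1 y (xw w)).1
    have hdH : (H.dist y (xw w) : ℝ) ≤ C₂ * (C₂ + 4 * K₂) := by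
      have hm := mul_le_mul_of_nonneg_left hl (le_of_lt hC₂0)
      have he : C₂ * ((1/C₂) * (H.dist y (xw w) : ℝ) - K₂)
          = (H.dist y (xw w) : ℝ) - C₂ * K₂ := by field_simp
      nlinarith
    have : H.dist (xw w) y ≤ R₂ := by
      rw [SimpleGraph.dist_comm]
      exact Nat.le_floor hdH
    exact Set.mem_biUnion hwB this
  obtain ⟨hUf, hUc⟩ := biUnion_card_le hbd (fun w => {y | H.dist (xw w) y ≤ R₂})
    ((DY + 1) ^ R₂) (fun w => (ball_finite_card hHc hYfin hDY (xw w) R₂).1)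
    (fun w => (ball_finite_card hHc hYfin hDY (xw w) R₂).2)
  exact le_trans (Set.ncard_le_ncard hsub hUf) hUc

end LocFin

/-- The composition of a quasi-`κ₁`-to-one quasi-isometry with a
quasi-`κ₂`-to-one quasi-isometry is a quasi-`κ₁κ₂`-to-one quasi-isometry. -/
theorem quasiKToOne_comp {X Y Z : Type*}
    (G : SimpleGraph X) (H : SimpleGraph Y) (I : SimpleGraph Z)
    (DX DY DZ : ℕ) (hGc : G.Connected) (hHc : H.Connected) (hIc : I.Connected)
    (hG : BddDeg G DX) (hH : BddDeg H DY) (hI : BddDeg I DZ)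
    (f : X → Y) (g : Y → Z) (κ₁ κ₂ : ℝ) (hκ₁ : 0 < κ₁) (hκ₂ : 0 < κ₂)
    (hf : IsQI G H f) (hg : IsQI H I g)
    (hfκ : QuasiKToOne H f κ₁) (hgκ : QuasiKToOne I g κ₂) :
    IsQI G I (g ∘ f) ∧ QuasiKToOne I (g ∘ f) (κ₁ * κ₂) := by
  obtain ⟨C₁, K₁, hC₁, hK₁, hfqi⟩ := hf
  obtain ⟨C₂, K₂, hC₂, hK₂, hgqi⟩ := hg
  obtain ⟨Cf, hCf, hfq⟩ := hfκ
  obtain ⟨Cg, hCg, hgq⟩ := hgκ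
  refine ⟨isQI_comp hIc hC₁ hK₁ hC₂ hK₂ hfqi hgqi, ?_⟩
  set M : ℝ := ((DY : ℝ) + 1) ^ ⌊C₂ * (C₂ + 4 * K₂)⌋₊ with hM
  have hM0 : (0:ℝ) < M := by positivity
  refine ⟨κ₁ * Cg + Cf * M + 1, by positivity, ?_⟩
  intro A hA
  rw [Set.preimage_comp]
  have hbdA0 : (0:ℝ) ≤ ((gBdry I A).ncard : ℝ) := Nat.cast_nonneg _
  have hA0 : (0:ℝ) ≤ (A.ncard : ℝ) := Nat.cast_nonneg _
  have hgA := hgq A hA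
  by_cases hdeg : ∃ y₀ : Y, (H.neighborSet y₀).Infinite
  · obtain ⟨y₀, hy₀⟩ := hdeg
    have hex := exact_of_infinite_nbr hκ₁ hfq hy₀
    by_cases hBfin : (g ⁻¹' A).Finite
    · have he := (hex _ hBfin).2
      rw [he]
      have hfact : κ₁ * κ₂ * (A.ncard : ℝ) - κ₁ * ((g ⁻¹' A).ncard : ℝ)
          = κ₁ * (κ₂ * (A.ncard : ℝ) - ((g ⁻¹' A).ncard : ℝ)) := by ring
      rw [hfact, abs_mul, abs_of_pos hκ₁]
      have h1 : κ₁ * |κ₂ * (A.ncard : ℝ) - ((g ⁻¹' A).ncard : ℝ)|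
          ≤ κ₁ * (Cg * ((gBdry I A).ncard : ℝ)) :=
        mul_le_mul_of_nonneg_left hgA (le_of_lt hκ₁)
      have h4 : (0:ℝ) ≤ (Cf * M + 1) * ((gBdry I A).ncard : ℝ) := by positivity
      nlinarith
    · have hBinf : (g ⁻¹' A).Infinite := hBfin
      have hfinf := preimage_infinite_of_exact hκ₁ hex hBinf
      rw [hfinf.ncard]
      rw [hBinf.ncard] at hgA
      push_cast at hgA ⊢
      rw [sub_zero] at hgA ⊢
      rw [abs_of_nonneg (by positivity)] at hgA ⊢
      have h5 := mul_le_mul_of_nonneg_left hgA (le_of_lt hκ₁)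
      have h4 : (0:ℝ) ≤ (Cf * M + 1) * ((gBdry I A).ncard : ℝ) := by positivity
      nlinarith
  · push_neg at hdeg
    have hYfin : ∀ v, (H.neighborSet v).Finite := fun v => hdeg v
    have hlow : ∀ x y : Y, (1/C₂) * (H.dist x y : ℝ) - K₂ ≤ (I.dist (g x) (g y) : ℝ) :=
      fun x y => (hgqi.1 x y).1
    have hBfin : (g ⁻¹' A).Finite :=
      preimage_finite_of_locfin hHc hYfin hH hC₂ hlow hA
    have hbdA : (gBdry I A).Finite :=
      bdryZ_finite hHc hIc hYfin hH hC₂ hκ₂ hlow hgq hA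
    have hcomp := bdry_comparison hHc hIc hYfin hH hC₂ hK₂ hgqi (A := A) hbdA
    have hfB := hfq _ hBfin
    have hcompR : ((gBdry H (g ⁻¹' A)).ncard : ℝ) ≤ ((gBdry I A).ncard : ℝ) * M := by
      rw [hM]
      exact_mod_cast hcomp
    have htri : |κ₁ * κ₂ * (A.ncard : ℝ) - ((f ⁻¹' (g ⁻¹' A)).ncard : ℝ)|
        ≤ κ₁ * |κ₂ * (A.ncard : ℝ) - ((g ⁻¹' A).ncard : ℝ)|
          + |κ₁ * ((g ⁻¹' A).ncard : ℝ) - ((f ⁻¹' (g ⁻¹' A)).ncard : ℝ)| := by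
      have hsplit : κ₁ * κ₂ * (A.ncard : ℝ) - ((f ⁻¹' (g ⁻¹' A)).ncard : ℝ)
          = κ₁ * (κ₂ * (A.ncard : ℝ) - ((g ⁻¹' A).ncard : ℝ))
            + (κ₁ * ((g ⁻¹' A).ncard : ℝ) - ((f ⁻¹' (g ⁻¹' A)).ncard : ℝ)) := by ring
      rw [hsplit]
      refine le_trans (abs_add_le _ _) ?_
      rw [abs_mul, abs_of_pos hκ₁]
    have h1 : κ₁ * |κ₂ * (A.ncard : ℝ) - ((g ⁻¹' A).ncard : ℝ)|
        ≤ κ₁ * (Cg * ((gBdry I A).ncard : ℝ)) :=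
      mul_le_mul_of_nonneg_left hgA (le_of_lt hκ₁)
    have h2 : |κ₁ * ((g ⁻¹' A).ncard : ℝ) - ((f ⁻¹' (g ⁻¹' A)).ncard : ℝ)|
        ≤ Cf * ((gBdry H (g ⁻¹' A)).ncard : ℝ) := hfB
    have h3 : Cf * ((gBdry H (g ⁻¹' A)).ncard : ℝ)
        ≤ Cf * (((gBdry I A).ncard : ℝ) * M) :=
      mul_le_mul_of_nonneg_left hcompR (le_of_lt hCf)
    nlinarith
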